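/- (Theorem 1, decay.) Set h_τ := [‖u(0)‖ + ∫_0^τ (α(ξ)·ν(ξ)·‖u(ξ−τ)‖^p + β(ξ)·ν(ξ)) dξ]/ν(τ). Assume α(t) > 0 for all t ≥ τ, the improper integral I := ∫_τ^∞ α(ξ)·σ(ξ)^p·ν(ξ)^{1−p} dξ converges, ω := sup_{t ≥ τ} (β(t)/α(t))^{1/p}·exp(−∫_0^{t−τ} γ(ξ) dξ) is finite, positive, and satisfies ω < ((p−1)·I)^{−1/(p−1)} − h_τ·ν(τ), and additionally lim_{t→∞} ∫_0^t γ(ξ) dξ = −∞. Then lim_{t→∞} ‖u(t)‖ = 0. -/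

import Mathlib

open Real MeasureTheory Set Filter ComplexInnerProductSpace

/-- `ν(t) = exp(−∫₀ᵗ γ(ξ) dξ)`. -/
noncomputable def nu (γ : ℝ → ℝ) (t : ℝ) : ℝ := Real.exp (-∫ ξ in (0:ℝ)..t, γ ξ)

/-- `σ(t) = exp(−∫_{t−τ}^t γ(ξ) dξ)`. -/
noncomputable def sig (γ : ℝ → ℝ) (τ t : ℝ) : ℝ :=
  Real.exp (-∫ ξ in (t - τ)..t, γ ξ)

lemma aux_rpow_superadd {p a b : ℝ} (hp : 1 ≤ p) (ha : 0 ≤ a) (hb : 0 ≤ b) :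
    a ^ p + b ^ p ≤ (a + b) ^ p := by
  have hp0 : p ≠ 0 := by positivity
  rcases eq_or_lt_of_le ha with ha0 | ha0
  · simp [← ha0, Real.zero_rpow hp0]
  rcases eq_or_lt_of_le hb with hb0 | hb0
  · simp [← hb0, Real.zero_rpow hp0]
  have hs : 0 < a + b := by linarith
  have key : ∀ x : ℝ, 0 < x → x ≤ a + b → x ^ p ≤ (x / (a + b)) * (a + b) ^ p := by
    intro x hx hxs
    have h1 : x ^ p = (x / (a + b)) ^ p * (a + b) ^ p := by
      rw [← Real.mul_rpow (by positivity) hs.le, div_mul_cancel₀ _ hs.ne']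
    rw [h1]
    have h2 : (x / (a + b)) ^ p ≤ (x / (a + b)) ^ (1 : ℝ) :=
      Real.rpow_le_rpow_of_exponent_ge (by positivity) (by
        rw [div_le_one hs]; exact hxs) hp
    rw [Real.rpow_one] at h2
    exact mul_le_mul_of_nonneg_right h2 (Real.rpow_nonneg hs.le p)
  have hA := key a ha0 (by linarith)
  have hB := key b hb0 (by linarith)
  have : a ^ p + b ^ p ≤ (a / (a + b) + b / (a + b)) * (a + b) ^ p := by
    rw [add_mul]; exact add_le_add hA hB
  rwa [← add_div, div_self hs.ne', one_mul] at this

/-- Theorem 2.5 (Theorem 1), decay: if moreover `∫₀ᵗ γ → −∞` as `t → ∞`, then `‖u(t)‖ → 0`. -/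
theorem stmt_10
    {H : Type*} [NormedAddCommGroup H] [InnerProductSpace ℂ H]
    (τ p : ℝ) (hτ : 0 < τ) (hp : 1 < p)
    (γ α β : ℝ → ℝ)
    (hγc : Continuous γ) (hαc : Continuous α) (hβc : Continuous β)
    (hα : ∀ t, 0 ≤ α t) (hβ : ∀ t, 0 ≤ β t)
    (u : ℝ → H) (u' : ℝ → H)
    (huc : ContinuousOn u (Ici (-τ)))
    (hud : ∀ t, 0 ≤ t → HasDerivWithinAt u (u' t) (Ici (0:ℝ)) t)
    (hnd : ∀ t, 0 ≤ t → DifferentiableWithinAt ℝ (fun s => ‖u s‖) (Ici (0:ℝ)) t)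
    (huineq : ∀ t, 0 ≤ t → (⟪u t, u' t⟫).re ≤
      γ t * ‖u t‖ ^ 2 + α t * ‖u t‖ * ‖u (t - τ)‖ ^ p + β t * ‖u t‖)
    (h h' : ℝ → ℝ)
    (hh0 : ∀ t, -τ ≤ t → 0 ≤ h t)
    (hhc : ContinuousOn h (Ici (-τ)))
    (hhd : ∀ t, 0 ≤ t → HasDerivWithinAt h (h' t) (Ici (0:ℝ)) t)
    (hheq : ∀ t, 0 ≤ t → h' t = γ t * h t + α t * h (t - τ) ^ p + β t)
    (hinit : ∀ t, -τ ≤ t → t ≤ 0 → h t = ‖u t‖)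
    (hτv : ℝ)
    (hτvdef : hτv = (‖u 0‖ + ∫ ξ in (0:ℝ)..τ,
        (α ξ * nu γ ξ * ‖u (ξ - τ)‖ ^ p + β ξ * nu γ ξ)) / nu γ τ)
    (hαpos : ∀ t, τ ≤ t → 0 < α t)
    (I : ℝ)
    (hint : IntegrableOn (fun ξ => α ξ * sig γ τ ξ ^ p * nu γ ξ ^ (1 - p)) (Ici τ))
    (hI : I = ∫ ξ in Ici τ, α ξ * sig γ τ ξ ^ p * nu γ ξ ^ (1 - p))
    (ω : ℝ)
    (hω : IsLUB {x : ℝ | ∃ t, τ ≤ t ∧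
        x = (β t / α t) ^ (1 / p) * Real.exp (-∫ ξ in (0:ℝ)..(t - τ), γ ξ)} ω)
    (hωpos : 0 < ω)
    (hωlt : ω < ((p - 1) * I) ^ (-(1 / (p - 1))) - hτv * nu γ τ)
    (hγlim : Tendsto (fun t => ∫ ξ in (0:ℝ)..t, γ ξ) atTop atBot) :
    Tendsto (fun t => ‖u t‖) atTop (nhds 0) := by
  -- basic facts about ν
  have hγint : ∀ a b : ℝ, IntervalIntegrable γ volume a b := fun a b =>
    hγc.intervalIntegrable a b
  have hGd : ∀ t : ℝ, HasDerivAt (fun s => ∫ ξ in (0:ℝ)..s, γ ξ) (γ t) t := by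
    intro t
    exact intervalIntegral.integral_hasDerivAt_right (hγint 0 t)
      (hγc.stronglyMeasurableAtFilter _ _) hγc.continuousAt
  have hνd : ∀ t : ℝ, HasDerivAt (nu γ) (-γ t * nu γ t) t := by
    intro t
    have := ((hGd t).neg).exp
    show HasDerivAt (fun x => Real.exp (-∫ ξ in (0:ℝ)..x, γ ξ)) (-γ t * nu γ t) t
    simpa [nu, mul_comm] using this
  have hνpos : ∀ t, 0 < nu γ t := fun t => Real.exp_pos _
  have hνc : Continuous (nu γ) := by
    have : Differentiable ℝ (nu γ) := fun t => (hνd t).differentiableAt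
    exact this.continuous
  have hν0 : nu γ 0 = 1 := by simp [nu]
  -- v = ‖u‖ and its derivative
  set v : ℝ → ℝ := fun t => ‖u t‖ with hv
  set v' : ℝ → ℝ := fun t => derivWithin v (Ici (0:ℝ)) t with hv'
  have hvd : ∀ t, 0 ≤ t → HasDerivWithinAt v (v' t) (Ici (0:ℝ)) t := fun t ht =>
    (hnd t ht).hasDerivWithinAt
  have hkey : ∀ t, 0 ≤ t → v t * v' t = (⟪u t, u' t⟫).re := by
    intro t ht
    have hud2 : UniqueDiffWithinAt ℝ (Ici (0:ℝ)) t := uniqueDiffOn_Ici 0 t (mem_Ici.mpr ht)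
    have A : HasDerivWithinAt (fun s => (⟪u s, u s⟫ : ℂ))
        (⟪u t, u' t⟫ + ⟪u' t, u t⟫) (Ici (0:ℝ)) t :=
      HasDerivWithinAt.inner ℂ (hud t ht) (hud t ht)
    have B : HasDerivWithinAt (fun s => (⟪u s, u s⟫ : ℂ).re)
        ((⟪u t, u' t⟫ + ⟪u' t, u t⟫).re) (Ici (0:ℝ)) t := by
      have := Complex.reCLM.hasFDerivAt.comp_hasDerivWithinAt t A
      simpa [Function.comp_def] using this
    have hfun : (fun s => (⟪u s, u s⟫ : ℂ).re) = fun s => v s ^ 2 := by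
      funext s
      rw [← RCLike.re_to_complex, inner_self_eq_norm_sq]
    rw [hfun] at B
    have C : HasDerivWithinAt (fun s => v s ^ 2) (2 * v t ^ 1 * v' t) (Ici (0:ℝ)) t := by
      simpa using (hvd t ht).fun_pow 2
    have heq : (⟪u t, u' t⟫ + ⟪u' t, u t⟫).re = 2 * v t ^ 1 * v' t := by
      rw [← B.derivWithin hud2, ← C.derivWithin hud2]
    have hconj : (⟪u' t, u t⟫ : ℂ).re = (⟪u t, u' t⟫ : ℂ).re := by
      rw [← RCLike.re_to_complex, ← RCLike.re_to_complex, inner_re_symm]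
    rw [Complex.add_re, hconj] at heq
    nlinarith [heq]
  -- y = h * ν
  set y : ℝ → ℝ := fun t => h t * nu γ t with hy
  have hyd : ∀ t, 0 ≤ t → HasDerivWithinAt y
      (nu γ t * (α t * h (t - τ) ^ p + β t)) (Ici (0:ℝ)) t := by
    intro t ht
    have := (hhd t ht).fun_mul ((hνd t).hasDerivWithinAt)
    rw [hheq t ht] at this
    refine this.congr_deriv ?_
    ring
  have hIcisub : Ici (0:ℝ) ⊆ Ici (-τ) := Ici_subset_Ici.mpr (by linarith)
  have hycont : ContinuousOn y (Ici (0:ℝ)) :=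
    (hhc.mono hIcisub).mul hνc.continuousOn
  have hymono : MonotoneOn y (Ici (0:ℝ)) := by
    apply monotoneOn_of_hasDerivWithinAt_nonneg (convex_Ici 0) hycont
      (f' := fun t => nu γ t * (α t * h (t - τ) ^ p + β t))
    · intro x hx
      rw [interior_Ici] at hx
      exact ((hyd x (le_of_lt hx)).mono (by rw [interior_Ici]; exact Ioi_subset_Ici_self))
    · intro x hx
      rw [interior_Ici] at hx
      have h1 : 0 ≤ h (x - τ) := hh0 _ (by simp only [mem_Ioi] at hx; linarith)
      have h2 : 0 ≤ h (x - τ) ^ p := Real.rpow_nonneg h1 p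
      exact mul_nonneg (hνpos x).le (add_nonneg (mul_nonneg (hα x) h2) (hβ x))
  -- h τ = hτv
  have hshiftc : ContinuousOn (fun ξ : ℝ => h (ξ - τ)) (Ici (0:ℝ)) := by
    apply hhc.comp (Continuous.continuousOn (by continuity))
    intro x hx
    simp only [mem_Ici] at *
    linarith
  have hintegrand_c : ContinuousOn (fun ξ => nu γ ξ * (α ξ * h (ξ - τ) ^ p + β ξ))
      (Ici (0:ℝ)) := by
    apply hνc.continuousOn.mul
    apply ContinuousOn.add _ hβc.continuousOn
    apply hαc.continuousOn.mul
    exact hshiftc.rpow_const (fun x hx => Or.inr (by linarith))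
  have hτveq : h τ = hτv := by
    have hFTC : ∫ ξ in (0:ℝ)..τ, nu γ ξ * (α ξ * h (ξ - τ) ^ p + β ξ) = y τ - y 0 := by
      apply intervalIntegral.integral_eq_sub_of_hasDeriv_right_of_le hτ.le
        (hycont.mono (Icc_subset_Ici_self))
      · intro x hx
        exact (hyd x hx.1.le).mono (fun s hs => le_of_lt (lt_trans hx.1 hs))
      · exact (hintegrand_c.mono (Icc_subset_Ici_self)).intervalIntegrable_of_Icc hτ.le
    have hcongr : ∫ ξ in (0:ℝ)..τ, (α ξ * nu γ ξ * ‖u (ξ - τ)‖ ^ p + β ξ * nu γ ξ)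
        = ∫ ξ in (0:ℝ)..τ, nu γ ξ * (α ξ * h (ξ - τ) ^ p + β ξ) := by
      apply intervalIntegral.integral_congr
      intro ξ hξ
      rw [uIcc_of_le hτ.le] at hξ
      have : h (ξ - τ) = ‖u (ξ - τ)‖ := hinit _ (by linarith [hξ.1]) (by linarith [hξ.2])
      simp only [this]; ring
    have hy0eq : y 0 = ‖u 0‖ := by
      simp only [hy, hν0, mul_one]
      exact hinit 0 (by linarith) le_rfl
    rw [hτvdef, hcongr, hFTC, hy0eq]
    field_simp [hy]
    rw [add_sub_cancel]; simp only [hy]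
    rw [mul_div_assoc, div_self (hνpos τ).ne', mul_one]
  -- comparison: ‖u t‖ ≤ h t
  have main : ∀ n : ℕ, ∀ t, -τ ≤ t → t ≤ n * τ → v t ≤ h t := by
    intro n
    induction n with
    | zero =>
      intro t ht1 ht2
      norm_num at ht2
      exact le_of_eq (hinit t ht1 ht2).symm
    | succ n ih =>
      intro t ht1 ht2
      by_cases hcase : t ≤ n * τ
      · exact ih t ht1 hcase
      push_neg at hcase
      set a : ℝ := n * τ with hadef
      set b : ℝ := (n + 1 : ℕ) * τ with hbdef
      have ha0 : (0:ℝ) ≤ a := by positivity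
      have hb' : b = a + τ := by rw [hbdef, hadef]; push_cast; ring
      obtain ⟨C, hC⟩ := (isCompact_Icc (a := a) (b := b)).exists_bound_of_continuousOn
        hγc.continuousOn
      set L : ℝ := C + 1 with hLdef
      have hL : ∀ x ∈ Icc a b, γ x < L := by
        intro x hx
        have := hC x hx
        rw [Real.norm_eq_abs] at this
        have := le_trans (le_abs_self _) this
        linarith
      have hbar : ∀ ε : ℝ, 0 < ε → ∀ x ∈ Icc a b,
          v x ≤ h x + ε * Real.exp (L * (x - a)) := by
        intro ε hε
        apply image_le_of_deriv_right_lt_deriv_boundary' (f := v) (f' := v')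
          (B := fun s => h s + ε * Real.exp (L * (s - a)))
          (B' := fun s => h' s + ε * (Real.exp (L * (s - a)) * (L * 1)))
        · exact (huc.mono (fun x hx => le_trans (by linarith) hx.1)).norm
        · intro x hx
          exact (hvd x (le_trans ha0 hx.1)).mono
            (fun s hs => le_trans (le_trans ha0 hx.1) hs)
        · have : v a ≤ h a := ih a (by linarith) le_rfl
          have : (0:ℝ) < ε * Real.exp (L * (a - a)) := by positivity
          linarith
        · apply ContinuousOn.add (hhc.mono (fun x hx => le_trans (by linarith) hx.1))
          have hcontB : Continuous (fun s : ℝ => ε * Real.exp (L * (s - a))) :=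
            continuous_const.mul (Real.continuous_exp.comp
              (continuous_const.mul (continuous_id.sub continuous_const)))
          exact hcontB.continuousOn
        · intro x hx
          have hder : HasDerivAt (fun s => ε * Real.exp (L * (s - a)))
              (ε * (Real.exp (L * (x - a)) * (L * 1))) x :=
            ((((hasDerivAt_id x).sub_const a).const_mul L).exp).const_mul ε
          exact ((hhd x (le_trans ha0 hx.1)).mono
            (fun s hs => le_trans (le_trans ha0 hx.1) hs)).add
            hder.hasDerivWithinAt
        · intro x hx heqx
          have hx0 : (0:ℝ) ≤ x := le_trans ha0 hx.1
          have hE : (0:ℝ) < ε * Real.exp (L * (x - a)) := by positivity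
          have hvxpos : 0 < v x := by
            rw [heqx]
            have := hh0 x (by linarith)
            linarith
          have hu1 : v (x - τ) ≤ h (x - τ) := ih (x - τ) (by linarith) (by
            have := hx.2
            rw [hb'] at this
            linarith [le_of_lt this])
          have hupow : ‖u (x - τ)‖ ^ p ≤ h (x - τ) ^ p :=
            Real.rpow_le_rpow (norm_nonneg _) hu1 (by linarith)
          have hprod : v x * v' x ≤ v x * (γ x * v x + α x * ‖u (x - τ)‖ ^ p + β x) := by
            rw [hkey x hx0]
            calc (⟪u x, u' x⟫).re ≤ γ x * ‖u x‖ ^ 2 + α x * ‖u x‖ * ‖u (x - τ)‖ ^ p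
                + β x * ‖u x‖ := huineq x hx0
              _ = v x * (γ x * v x + α x * ‖u (x - τ)‖ ^ p + β x) := by
                  simp only [hv]; ring
          have hv'le : v' x ≤ γ x * v x + α x * ‖u (x - τ)‖ ^ p + β x :=
            le_of_mul_le_mul_left hprod hvxpos
          have hstep : v' x ≤ γ x * v x + α x * h (x - τ) ^ p + β x := by
            have := mul_le_mul_of_nonneg_left hupow (hα x)
            linarith
          have hfin : γ x * v x + α x * h (x - τ) ^ p + β x
              = h' x + γ x * (ε * Real.exp (L * (x - a))) := by
            rw [hheq x hx0, heqx]
            ring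
          have hglt : γ x * (ε * Real.exp (L * (x - a)))
              < L * (ε * Real.exp (L * (x - a))) :=
            mul_lt_mul_of_pos_right (hL x (Ico_subset_Icc_self hx)) hE
          have : L * (ε * Real.exp (L * (x - a)))
              = ε * (Real.exp (L * (x - a)) * (L * 1)) := by ring
          linarith
      have htmem : t ∈ Icc a b := ⟨hcase.le, ht2⟩
      refine le_of_forall_pos_le_add ?_
      intro ε hε
      have hEpos : 0 < Real.exp (L * (t - a)) := Real.exp_pos _
      have := hbar (ε / Real.exp (L * (t - a))) (by positivity) t htmem
      rwa [div_mul_cancel₀ _ hEpos.ne'] at this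
  have hcomp : ∀ t, -τ ≤ t → v t ≤ h t := by
    intro t ht
    obtain ⟨n, hn⟩ := exists_nat_ge (t / τ)
    exact main n t ht ((div_le_iff₀ hτ).mp hn)
  -- boundedness of y on [τ, ∞)
  obtain ⟨M, hM⟩ : ∃ M : ℝ, ∀ t, τ ≤ t → y t ≤ M := by
    set φ : ℝ → ℝ := fun ξ => α ξ * sig γ τ ξ ^ p * nu γ ξ ^ (1 - p) with hφdef
    have hGc : Continuous (fun s : ℝ => ∫ ξ in (0:ℝ)..s, γ ξ) := by
      have : Differentiable ℝ (fun s : ℝ => ∫ ξ in (0:ℝ)..s, γ ξ) :=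
        fun t => (hGd t).differentiableAt
      exact this.continuous
    have hσeq : ∀ t : ℝ, sig γ τ t = nu γ t / nu γ (t - τ) := by
      intro t
      rw [sig, nu, nu, ← intervalIntegral.integral_interval_sub_left (hγint 0 t)
        (hγint 0 (t - τ)), div_eq_mul_inv, ← Real.exp_neg, ← Real.exp_add]
      ring_nf
    have hσc : Continuous (sig γ τ) := by
      have : sig γ τ = fun t => nu γ t / nu γ (t - τ) := funext hσeq
      rw [this]
      exact hνc.div (hνc.comp (continuous_id.sub continuous_const))
        (fun t => (hνpos _).ne')
    have hσpos : ∀ t, 0 < sig γ τ t := fun t => Real.exp_pos _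
    have hφc : Continuous φ := by
      apply Continuous.mul
      · exact hαc.mul (hσc.rpow_const (fun t => Or.inl (hσpos t).ne'))
      · exact hνc.rpow_const (fun t => Or.inl (hνpos t).ne')
    have hφnn : ∀ ξ, 0 ≤ φ ξ := fun ξ => mul_nonneg
      (mul_nonneg (hα ξ) (Real.rpow_nonneg (hσpos ξ).le p))
      (Real.rpow_nonneg (hνpos ξ).le _)
    have hφint_le : ∀ t, τ ≤ t → ∫ ξ in τ..t, φ ξ ≤ I := by
      intro t ht
      rw [hI, intervalIntegral.integral_of_le ht]
      apply setIntegral_mono_set hint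
        (Eventually.of_forall fun ξ => hφnn ξ)
        (HasSubset.Subset.eventuallyLE (fun ξ hξ => le_of_lt hξ.1))
    have hIpos : 0 < I := by
      have h1 : 0 < ∫ ξ in τ..(τ+1), φ ξ := by
        apply intervalIntegral.intervalIntegral_pos_of_pos_on
          (hφc.intervalIntegrable _ _)
        · intro x hx
          exact mul_pos (mul_pos (hαpos x hx.1.le)
            (Real.rpow_pos_of_pos (hσpos x) p)) (Real.rpow_pos_of_pos (hνpos x) _)
        · linarith
      exact lt_of_lt_of_le h1 (hφint_le (τ+1) (by linarith))
    set z : ℝ → ℝ := fun t => y t + ω with hzdef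
    have hy0 : ∀ t, 0 ≤ t → 0 ≤ y t := fun t ht =>
      mul_nonneg (hh0 t (by linarith)) (hνpos t).le
    have hzpos : ∀ t, 0 ≤ t → 0 < z t := fun t ht => by
      have := hy0 t ht; simp only [hzdef]; linarith
    have hφx : ∀ x : ℝ, φ x = α x * nu γ x / nu γ (x - τ) ^ p := by
      intro x
      rw [hφdef]
      simp only
      rw [hσeq x, Real.div_rpow (hνpos x).le (hνpos (x - τ)).le]
      have hpow : nu γ x ^ p * nu γ x ^ (1 - p) = nu γ x := by
        rw [← Real.rpow_add (hνpos x)]; norm_num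
      calc α x * (nu γ x ^ p / nu γ (x - τ) ^ p) * nu γ x ^ (1 - p)
          = α x * (nu γ x ^ p * nu γ x ^ (1 - p)) / nu γ (x - τ) ^ p := by ring
        _ = α x * nu γ x / nu γ (x - τ) ^ p := by rw [hpow]
    have hy'le : ∀ x, τ ≤ x → nu γ x * (α x * h (x - τ) ^ p + β x) ≤ φ x * z x ^ p := by
      intro x hx
      have hx0 : (0:ℝ) ≤ x := le_trans hτ.le hx
      have hxτ0 : (0:ℝ) ≤ x - τ := by linarith
      have hνm := hνpos (x - τ)
      have hh1 : h (x - τ) ≤ y x / nu γ (x - τ) := by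
        have h1 : y (x - τ) ≤ y x := hymono (mem_Ici.mpr hxτ0) (mem_Ici.mpr hx0)
          (by linarith)
        rw [le_div_iff₀ hνm]
        calc h (x - τ) * nu γ (x - τ) = y (x - τ) := rfl
          _ ≤ y x := h1
      have hh2 : h (x - τ) ^ p ≤ y x ^ p / nu γ (x - τ) ^ p := by
        rw [← Real.div_rpow (hy0 x hx0) hνm.le]
        exact Real.rpow_le_rpow (hh0 _ (by linarith)) hh1 (by linarith)
      have hβ2 : β x ≤ α x * (ω ^ p / nu γ (x - τ) ^ p) := by
        have hmem : (β x / α x) ^ (1 / p) * Real.exp (-∫ ξ in (0:ℝ)..(x - τ), γ ξ) ≤ ω :=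
          hω.1 ⟨x, hx, rfl⟩
        have hexp : Real.exp (-∫ ξ in (0:ℝ)..(x - τ), γ ξ) = nu γ (x - τ) := rfl
        rw [hexp] at hmem
        have h3 : (β x / α x) ^ (1 / p) ≤ ω / nu γ (x - τ) := by
          rw [le_div_iff₀ hνm]; exact hmem
        have h4 : ((β x / α x) ^ (1 / p)) ^ p ≤ (ω / nu γ (x - τ)) ^ p :=
          Real.rpow_le_rpow (Real.rpow_nonneg (div_nonneg (hβ x) (hα x)) _) h3
            (by linarith)
        rw [← Real.rpow_mul (div_nonneg (hβ x) (hα x)), one_div,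
          inv_mul_cancel₀ (by linarith : p ≠ 0), Real.rpow_one] at h4
        rw [Real.div_rpow hωpos.le hνm.le] at h4
        have h5 := (div_le_iff₀ (hαpos x hx)).mp h4
        calc β x ≤ ω ^ p / nu γ (x - τ) ^ p * α x := h5
          _ = α x * (ω ^ p / nu γ (x - τ) ^ p) := by ring
      calc nu γ x * (α x * h (x - τ) ^ p + β x)
          ≤ nu γ x * (α x * (y x ^ p / nu γ (x - τ) ^ p)
              + α x * (ω ^ p / nu γ (x - τ) ^ p)) := by
            apply mul_le_mul_of_nonneg_left _ (hνpos x).le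
            exact add_le_add (mul_le_mul_of_nonneg_left hh2 (hα x)) hβ2
        _ = α x * nu γ x / nu γ (x - τ) ^ p * (y x ^ p + ω ^ p) := by ring
        _ ≤ α x * nu γ x / nu γ (x - τ) ^ p * ((y x + ω) ^ p) := by
            apply mul_le_mul_of_nonneg_left
              (aux_rpow_superadd hp.le (hy0 x hx0) hωpos.le)
            exact div_nonneg (mul_nonneg (hα x) (hνpos x).le)
              (Real.rpow_nonneg hνm.le p)
        _ = φ x * z x ^ p := by rw [hφx x]
    -- the function G is monotone
    set G : ℝ → ℝ := fun t => z t ^ (1 - p) + (p - 1) * ∫ ξ in τ..t, φ ξ with hGdef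
    have hφd : ∀ x : ℝ, HasDerivAt (fun t => ∫ ξ in τ..t, φ ξ) (φ x) x := fun x =>
      intervalIntegral.integral_hasDerivAt_right (hφc.intervalIntegrable _ _)
        (hφc.stronglyMeasurableAtFilter _ _) hφc.continuousAt
    have hprimc : Continuous (fun t => ∫ ξ in τ..t, φ ξ) := by
      have : Differentiable ℝ (fun t => ∫ ξ in τ..t, φ ξ) :=
        fun t => (hφd t).differentiableAt
      exact this.continuous
    have hzcont : ContinuousOn z (Ici τ) :=
      (hycont.mono (Ici_subset_Ici.mpr hτ.le)).add continuousOn_const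
    have hGcont : ContinuousOn G (Ici τ) := by
      apply ContinuousOn.add
      · exact hzcont.rpow_const (fun x hx => Or.inl (hzpos x (le_trans hτ.le hx)).ne')
      · exact (continuous_const.mul hprimc).continuousOn
    have hGmono : MonotoneOn G (Ici τ) := by
      apply monotoneOn_of_hasDerivWithinAt_nonneg (convex_Ici τ) hGcont
        (f' := fun x => nu γ x * (α x * h (x - τ) ^ p + β x) * (1 - p)
          * z x ^ ((1 - p) - 1) + (p - 1) * φ x)
      · intro x hx
        rw [interior_Ici] at hx ⊢
        have hx0 : (0:ℝ) ≤ x := le_trans hτ.le hx.le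
        have hzd : HasDerivWithinAt z (nu γ x * (α x * h (x - τ) ^ p + β x))
            (Ioi τ) x :=
          ((hyd x hx0).mono (fun s hs => le_trans hτ.le (le_of_lt hs))).add_const ω
        exact (hzd.rpow_const (Or.inl (hzpos x hx0).ne')).add
          (((hφd x).const_mul (p - 1)).hasDerivWithinAt)
      · intro x hx
        rw [interior_Ici] at hx
        have hx0 : (0:ℝ) ≤ x := le_trans hτ.le hx.le
        have hzx := hzpos x hx0
        have he : (1 - p) - 1 = -p := by ring
        rw [he]
        have hzp : (0:ℝ) < z x ^ (-p) := Real.rpow_pos_of_pos hzx _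
        have hmul : z x ^ p * z x ^ (-p) = 1 := by
          rw [← Real.rpow_add hzx]; norm_num
        have h12 : nu γ x * (α x * h (x - τ) ^ p + β x) * z x ^ (-p) ≤ φ x := by
          have := mul_le_mul_of_nonneg_right (hy'le x hx.le) hzp.le
          calc nu γ x * (α x * h (x - τ) ^ p + β x) * z x ^ (-p)
              ≤ φ x * z x ^ p * z x ^ (-p) := this
            _ = φ x * (z x ^ p * z x ^ (-p)) := by ring
            _ = φ x := by rw [hmul, mul_one]
        nlinarith [h12, hp]
    -- use hωlt to bound z
    have hzτpos : 0 < z τ := hzpos τ hτ.le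
    have hzτval : z τ = hτv * nu γ τ + ω := by
      simp only [hzdef, hy, hτveq]
    have hPIpos : 0 < (p - 1) * I := mul_pos (by linarith) hIpos
    have hzτlt : z τ < ((p - 1) * I) ^ (-(1 / (p - 1))) := by
      rw [hzτval]; linarith
    have h8 : (p - 1) * I < z τ ^ (1 - p) := by
      have h9 := Real.rpow_lt_rpow_of_neg hzτpos hzτlt
        (by linarith : (1:ℝ) - p < 0)
      rw [← Real.rpow_mul hPIpos.le] at h9
      have he : (-(1 / (p - 1))) * (1 - p) = 1 := by
        have hne : p - 1 ≠ 0 := ne_of_gt (by linarith)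
        field_simp
        ring
      rw [he, Real.rpow_one] at h9
      exact h9
    have hcpos : 0 < z τ ^ (1 - p) - (p - 1) * I := by linarith
    refine ⟨(z τ ^ (1 - p) - (p - 1) * I) ^ (1 / (1 - p)), ?_⟩
    intro t ht
    have ht0 : (0:ℝ) ≤ t := le_trans hτ.le ht
    have hzt : 0 < z t := hzpos t ht0
    have h5 := hGmono (mem_Ici.mpr le_rfl) (mem_Ici.mpr ht) ht
    simp only [hGdef, intervalIntegral.integral_same, mul_zero, add_zero] at h5
    have h7 : (p - 1) * (∫ ξ in τ..t, φ ξ) ≤ (p - 1) * I :=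
      mul_le_mul_of_nonneg_left (hφint_le t ht) (by linarith)
    have h10 : z τ ^ (1 - p) - (p - 1) * I ≤ z t ^ (1 - p) := by linarith
    have h11 := Real.rpow_le_rpow_of_nonpos hcpos h10
      (le_of_lt (div_neg_of_pos_of_neg one_pos (by linarith : (1:ℝ) - p < 0)))
    rw [← Real.rpow_mul hzt.le, mul_one_div, div_self (sub_ne_zero.mpr (ne_of_lt hp)),
      Real.rpow_one] at h11
    have : y t ≤ z t := by simp only [hzdef]; linarith
    linarith
  -- conclusion
  have hνinv : Tendsto (fun t => M * Real.exp (∫ ξ in (0:ℝ)..t, γ ξ)) atTop (nhds 0) := by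
    have := (Real.tendsto_exp_atBot.comp hγlim).const_mul M
    simpa using this
  apply squeeze_zero' (Eventually.of_forall fun t => norm_nonneg _)
    ?_ hνinv
  filter_upwards [eventually_ge_atTop τ] with t ht
  have ht0 : (0:ℝ) ≤ t := le_trans hτ.le ht
  have h1 : v t ≤ h t := hcomp t (by linarith)
  have h2 : h t * nu γ t ≤ M := hM t ht
  have h3 : h t ≤ M * Real.exp (∫ ξ in (0:ℝ)..t, γ ξ) := by
    have hne : nu γ t > 0 := hνpos t
    calc h t ≤ M / nu γ t := (le_div_iff₀ hne).mpr h2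
      _ = M * Real.exp (∫ ξ in (0:ℝ)..t, γ ξ) := by
          rw [nu, div_eq_mul_inv, ← Real.exp_neg, neg_neg]
  exact le_trans h1 h3
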